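/- Let q ≥ 2 be a prime power, n ≥ 3 an odd integer, m = (q^n+1)/(q+1), and let S ⊆ ℕ be the additive submonoid generated by q³, m·q, and q^n+1. Set g = (q−1)(q^{n+1} + q^n − q²)/2. Then S is a symmetric numerical semigroup with exactly g gaps and largest gap 2g−1; that is: the complement ℕ ∖ S has exactly g elements, every natural number ≥ 2g belongs to S, and for every natural number x ≤ 2g−1 one has x ∈ S if and only if 2g−1−x ∉ S (in particular 2g−1 ∉ S). -/

import Mathlib

/-- The Weierstrass semigroup `S = ⟨q³, mq, qⁿ+1⟩` of the GGS curve is a symmetric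
numerical semigroup with exactly `g` gaps and largest gap `2g-1`, where `g` is the
genus of `GGS(q,n)`. -/
theorem stmt_13 (q n m g : ℕ) (hq : IsPrimePow q) (hq2 : 2 ≤ q) (hn : 3 ≤ n)
    (hodd : Odd n) (hm : m * (q + 1) = q ^ n + 1)
    (hg : 2 * g = (q - 1) * (q ^ (n + 1) + q ^ n - q ^ 2))
    (S : AddSubmonoid ℕ)
    (hS : S = AddSubmonoid.closure {q ^ 3, m * q, q ^ n + 1}) :
    ((↑S : Set ℕ)ᶜ).ncard = g ∧
    (∀ x : ℕ, 2 * g ≤ x → x ∈ S) ∧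
    (∀ x : ℕ, x ≤ 2 * g - 1 → (x ∈ S ↔ (2 * g - 1 - x) ∉ S)) ∧
    (2 * g - 1) ∉ S := by
  classical
  have hq0 : 0 < q := by omega
  have hqz : (0:ℤ) < (q:ℤ) := by exact_mod_cast hq0
  have hmz : (m:ℤ) * ((q:ℤ) + 1) = (q:ℤ) ^ n + 1 := by exact_mod_cast hm
  have hm1 : 1 ≤ m := by
    rcases Nat.eq_zero_or_pos m with h | h
    · subst h; simp at hm
    · exact h
  have hmz0 : (0:ℤ) < (m:ℤ) := by exact_mod_cast hm1
  have hqn1 : (q:ℤ) ^ n = (q:ℤ) ^ 1 * (q:ℤ) ^ (n-1) := by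
    rw [← pow_add, Nat.add_sub_cancel' (by omega : 1 ≤ n)]
  have hqn2 : (q:ℤ) ^ n = (q:ℤ) ^ 2 * (q:ℤ) ^ (n-2) := by
    rw [← pow_add, Nat.add_sub_cancel' (by omega : 2 ≤ n)]
  -- genus over ℤ
  have hpow : q ^ 2 < q ^ (n+1) := Nat.pow_lt_pow_right (by omega) (by omega)
  have hgz : 2 * (g:ℤ) = ((q:ℤ) - 1) * ((q:ℤ) ^ (n+1) + (q:ℤ) ^ n - (q:ℤ) ^ 2) := by
    have h1 : 1 ≤ q := by omega
    have h2 : q ^ 2 ≤ q ^ (n+1) + q ^ n := by omega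
    zify [h1, h2] at hg
    exact hg
  have hg1 : 1 ≤ g := by
    by_contra h
    have hg0 : g = 0 := by omega
    rw [hg0] at hgz
    push_cast at hgz
    have h1 : (1:ℤ) ≤ (q:ℤ) - 1 := by omega
    have h2 : (1:ℤ) ≤ (q:ℤ) ^ (n+1) + (q:ℤ) ^ n - (q:ℤ) ^ 2 := by
      have : (q:ℤ)^2 < (q:ℤ)^(n+1) := by exact_mod_cast hpow
      have : (0:ℤ) < (q:ℤ)^n := by positivity
      omega
    nlinarith
  -- Frobenius identity
  have hFz : 2 * (g:ℤ) - 1 + (q:ℤ)^3 = ((q:ℤ)^2 - 1) * ((m:ℤ)*(q:ℤ)) + ((q:ℤ) - 1) * ((q:ℤ)^n + 1) := by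
    linear_combination hgz - ((q:ℤ) - 1) * (q:ℤ) * hmz
  -- membership: nonneg combos
  have hmem : ∀ x : ℕ, x ∈ S ↔ ∃ a b c : ℕ, x = a * q^3 + b * (m*q) + c * (q^n+1) := by
    subst hS
    intro x
    constructor
    · intro hx
      induction hx using AddSubmonoid.closure_induction with
      | mem y hy =>
        simp only [Set.mem_insert_iff, Set.mem_singleton_iff] at hy
        rcases hy with h | h | h
        · exact ⟨1, 0, 0, by simp [h]⟩
        · exact ⟨0, 1, 0, by simp [h]⟩
        · exact ⟨0, 0, 1, by simp [h]⟩
      | zero => exact ⟨0, 0, 0, by simp⟩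
      | add y z hy hz ihy ihz =>
        obtain ⟨a, b, c, rfl⟩ := ihy
        obtain ⟨a', b', c', rfl⟩ := ihz
        exact ⟨a + a', b + b', c + c', by ring⟩
    · rintro ⟨a, b, c, rfl⟩
      have h1 : q^3 ∈ AddSubmonoid.closure ({q ^ 3, m * q, q ^ n + 1} : Set ℕ) :=
        AddSubmonoid.subset_closure (by simp)
      have h2 : m*q ∈ AddSubmonoid.closure ({q ^ 3, m * q, q ^ n + 1} : Set ℕ) :=
        AddSubmonoid.subset_closure (by simp)
      have h3 : q^n+1 ∈ AddSubmonoid.closure ({q ^ 3, m * q, q ^ n + 1} : Set ℕ) :=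
        AddSubmonoid.subset_closure (by simp)
      exact add_mem (add_mem (by simpa [nsmul_eq_mul] using AddSubmonoid.nsmul_mem _ h1 a)
        (by simpa [nsmul_eq_mul] using AddSubmonoid.nsmul_mem _ h2 b))
        (by simpa [nsmul_eq_mul] using AddSubmonoid.nsmul_mem _ h3 c)
  -- normalization in ℕ
  have hid : q * (q^n+1) = (q+1) * (m*q) := by rw [← hm]; ring
  have hnorm : ∀ a b c : ℕ, ∃ A B C : ℕ, B < q^2 ∧ C < q ∧
      a*q^3 + b*(m*q) + c*(q^n+1) = A*q^3 + B*(m*q) + C*(q^n+1) := by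
    intro a b c
    obtain ⟨X, Y, hY, rfl⟩ : ∃ X Y, Y < q ∧ c = q*X + Y :=
      ⟨c/q, c%q, Nat.mod_lt _ hq0, (Nat.div_add_mod c q).symm⟩
    obtain ⟨Z, W, hW, hZW⟩ : ∃ Z W, W < q^2 ∧ b + X*(q+1) = q^2*Z + W :=
      ⟨_, _, Nat.mod_lt _ (by positivity), (Nat.div_add_mod _ _).symm⟩
    refine ⟨a + Z*m, W, Y, hW, hY, ?_⟩
    zify at hZW hid ⊢
    linear_combination ((X:ℤ)) * hid + ((m:ℤ)*(q:ℤ)) * hZW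
  -- existence of canonical representation over ℤ
  have hex : ∀ x : ℤ, ∃ α β γ : ℤ, 0 ≤ β ∧ β < (q:ℤ)^2 ∧ 0 ≤ γ ∧ γ < (q:ℤ) ∧
      x = α*(q:ℤ)^3 + β*((m:ℤ)*(q:ℤ)) + γ*((q:ℤ)^n+1) := by
    intro x
    set γ : ℤ := x % (q:ℤ) with hγdef
    have hγ0 : 0 ≤ γ := Int.emod_nonneg x (by omega)
    have hγlt : γ < (q:ℤ) := Int.emod_lt_of_pos x hqz
    have h1 := Int.mul_ediv_add_emod x (q:ℤ)
    rw [← hγdef] at h1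
    set y : ℤ := x / (q:ℤ) - γ * (q:ℤ)^(n-1) with hydef
    have hy : x - γ*((q:ℤ)^n+1) = (q:ℤ) * y := by
      rw [hydef]; linear_combination -h1 - γ*hqn1
    set β : ℤ := (y*((q:ℤ)+1)) % ((q:ℤ)^2) with hβdef
    have hβ0 : 0 ≤ β := Int.emod_nonneg _ (by positivity)
    have hβlt : β < (q:ℤ)^2 := Int.emod_lt_of_pos _ (by positivity)
    have h2 := Int.mul_ediv_add_emod (y*((q:ℤ)+1)) ((q:ℤ)^2)
    rw [← hβdef] at h2
    refine ⟨(y*((q:ℤ)+1)) / (q:ℤ)^2 * m - y * (q:ℤ)^(n-2), β, γ, hβ0, hβlt, hγ0, hγlt, ?_⟩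
    linear_combination hy - (q:ℤ)*(m:ℤ)*h2 - (q:ℤ)*y*hmz - (q:ℤ)*y*hqn2
  -- uniqueness of canonical representation
  have hzero : ∀ d v : ℤ, d ∣ v → -d < v → v < d → v = 0 := by
    intro d v hdv hv1 hv2
    exact Int.eq_zero_of_abs_lt_dvd hdv (abs_lt.mpr ⟨hv1, hv2⟩)
  have huniq : ∀ α β γ α' β' γ' : ℤ, 0 ≤ β → β < (q:ℤ)^2 → 0 ≤ γ → γ < (q:ℤ) →
      0 ≤ β' → β' < (q:ℤ)^2 → 0 ≤ γ' → γ' < (q:ℤ) →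
      α*(q:ℤ)^3 + β*((m:ℤ)*(q:ℤ)) + γ*((q:ℤ)^n+1)
        = α'*(q:ℤ)^3 + β'*((m:ℤ)*(q:ℤ)) + γ'*((q:ℤ)^n+1) →
      α = α' ∧ β = β' ∧ γ = γ' := by
    intro α β γ α' β' γ' hβ0 hβl hγ0 hγl hb0 hbl hc0 hcl heq
    have hγγ : γ = γ' := by
      have hd : (q:ℤ) ∣ (γ - γ') := ⟨(α'-α)*(q:ℤ)^2 + (β'-β)*(m:ℤ) + (γ'-γ)*(q:ℤ)^(n-1), by
        linear_combination heq + (γ'-γ)*hqn1⟩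
      have := hzero _ _ hd (by linarith) (by linarith)
      linarith
    rw [hγγ] at heq
    have hAB : (α-α')*(q:ℤ)^2 = (β'-β)*(m:ℤ) := by
      have h3 : ((α-α')*(q:ℤ)^2) * (q:ℤ) = ((β'-β)*(m:ℤ)) * (q:ℤ) := by linear_combination heq
      exact mul_right_cancel₀ (by positivity) h3
    have hββ : β = β' := by
      have hd : (q:ℤ)^2 ∣ (β' - β) := ⟨(α-α')*((q:ℤ)+1) - (β'-β)*(q:ℤ)^(n-2), by
        linear_combination (-(q:ℤ)-1)*hAB - (β'-β)*hmz - (β'-β)*hqn2⟩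
      have := hzero _ _ hd (by linarith) (by linarith)
      linarith
    have h4 : (α-α')*(q:ℤ)^2 = 0 := by rw [hAB, hββ]; ring
    have h5 : α - α' = 0 := by
      rcases mul_eq_zero.mp h4 with h | h
      · exact h
      · exact absurd h (by positivity)
    exact ⟨by linarith, hββ, hγγ⟩
  -- membership iff the canonical α is nonnegative
  have hSiff : ∀ (x : ℕ) (α β γ : ℤ), 0 ≤ β → β < (q:ℤ)^2 → 0 ≤ γ → γ < (q:ℤ) →
      (x:ℤ) = α*(q:ℤ)^3 + β*((m:ℤ)*(q:ℤ)) + γ*((q:ℤ)^n+1) → (x ∈ S ↔ 0 ≤ α) := by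
    intro x α β γ hβ0 hβl hγ0 hγl hx
    constructor
    · intro hxS
      obtain ⟨a, b, c, habc⟩ := (hmem x).1 hxS
      obtain ⟨A, B, C, hB, hC, hval⟩ := hnorm a b c
      have hxz : (x:ℤ) = (A:ℤ)*(q:ℤ)^3 + (B:ℤ)*((m:ℤ)*(q:ℤ)) + (C:ℤ)*((q:ℤ)^n+1) := by
        rw [habc, hval]; push_cast; ring
      obtain ⟨h1, -, -⟩ := huniq α β γ (A:ℤ) (B:ℤ) (C:ℤ) hβ0 hβl hγ0 hγl
        (by positivity) (by exact_mod_cast hB) (by positivity) (by exact_mod_cast hC)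
        (hx.symm.trans hxz)
      rw [h1]; positivity
    · intro hα
      refine (hmem x).2 ⟨α.toNat, β.toNat, γ.toNat, ?_⟩
      have hz : (x:ℤ) = ((α.toNat : ℕ):ℤ)*(q:ℤ)^3 + ((β.toNat : ℕ):ℤ)*((m:ℤ)*(q:ℤ))
          + ((γ.toNat : ℕ):ℤ)*((q:ℤ)^n+1) := by
        rw [Int.toNat_of_nonneg hα, Int.toNat_of_nonneg hβ0, Int.toNat_of_nonneg hγ0]
        exact hx
      exact_mod_cast hz
  have hrepS : ∀ x : ℕ, ∃ α β γ : ℤ, 0 ≤ β ∧ β < (q:ℤ)^2 ∧ 0 ≤ γ ∧ γ < (q:ℤ) ∧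
      (x:ℤ) = α*(q:ℤ)^3 + β*((m:ℤ)*(q:ℤ)) + γ*((q:ℤ)^n+1) ∧ (x ∈ S ↔ 0 ≤ α) := by
    intro x
    obtain ⟨α, β, γ, h1, h2, h3, h4, h5⟩ := hex (x:ℤ)
    exact ⟨α, β, γ, h1, h2, h3, h4, h5, hSiff x α β γ h1 h2 h3 h4 h5⟩
  -- conductor: everything ≥ 2g is in S
  have part2 : ∀ x : ℕ, 2*g ≤ x → x ∈ S := by
    intro x hx
    obtain ⟨α, β, γ, h1, h2, h3, h4, h5, h6⟩ := hrepS x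
    rw [h6]
    by_contra hα
    push_neg at hα
    have h2' : β + 1 ≤ (q:ℤ)^2 := Int.lt_iff_add_one_le.mp h2
    have h4' : γ + 1 ≤ (q:ℤ) := Int.lt_iff_add_one_le.mp h4
    have hα' : α + 1 ≤ 0 := Int.lt_iff_add_one_le.mp hα
    have e1 : β*((m:ℤ)*(q:ℤ)) ≤ ((q:ℤ)^2-1)*((m:ℤ)*(q:ℤ)) :=
      mul_le_mul_of_nonneg_right (by linarith) (by positivity)
    have e2 : γ*((q:ℤ)^n+1) ≤ ((q:ℤ)-1)*((q:ℤ)^n+1) :=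
      mul_le_mul_of_nonneg_right (by linarith) (by positivity)
    have e3 : α*(q:ℤ)^3 ≤ (-1)*(q:ℤ)^3 :=
      mul_le_mul_of_nonneg_right (by linarith) (by positivity)
    have hxz : (2*(g:ℤ)) ≤ (x:ℤ) := by exact_mod_cast hx
    linarith [hFz]
  -- symmetry
  have part3 : ∀ x : ℕ, x ≤ 2*g-1 → (x ∈ S ↔ (2*g-1-x) ∉ S) := by
    intro x hx
    obtain ⟨α, β, γ, h1, h2, h3, h4, h5, h6⟩ := hrepS x
    obtain ⟨α', β', γ', k1, k2, k3, k4, k5, k6⟩ := hrepS (2*g-1-x)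
    have hcast : ((2*g-1-x : ℕ) : ℤ) = 2*(g:ℤ) - 1 - (x:ℤ) := by omega
    have h2' : β + 1 ≤ (q:ℤ)^2 := Int.lt_iff_add_one_le.mp h2
    have h4' : γ + 1 ≤ (q:ℤ) := Int.lt_iff_add_one_le.mp h4
    have hval' : ((2*g-1-x : ℕ) : ℤ) = (-1-α)*(q:ℤ)^3 + ((q:ℤ)^2-1-β)*((m:ℤ)*(q:ℤ))
        + ((q:ℤ)-1-γ)*((q:ℤ)^n+1) := by
      rw [hcast]; linear_combination hFz - h5
    obtain ⟨u1, -, -⟩ := huniq α' β' γ' (-1-α) ((q:ℤ)^2-1-β) ((q:ℤ)-1-γ)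
      k1 k2 k3 k4 (by linarith) (by linarith) (by linarith) (by linarith)
      (k5.symm.trans hval')
    rw [h6, k6, u1]
    omega
  have hF : (2*g-1) ∉ S := by
    have h := part3 (2*g-1) le_rfl
    simp only [Nat.sub_self] at h
    intro hc
    exact (h.mp hc) (zero_mem S)
  refine ⟨?_, part2, part3, hF⟩
  -- the gap count
  have hsub : ((↑S : Set ℕ)ᶜ) = ↑((Finset.range (2*g)).filter (fun x => x ∉ S)) := by
    ext x
    simp only [Set.mem_compl_iff, SetLike.mem_coe, Finset.coe_filter, Set.mem_setOf_eq,
      Finset.mem_range]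
    constructor
    · intro hx
      exact ⟨by by_contra hcon; exact hx (part2 x (by omega)), hx⟩
    · rintro ⟨-, hx⟩; exact hx
  rw [hsub, Set.ncard_coe_finset]
  have hbij : ((Finset.range (2*g)).filter (fun x => x ∉ S)).card
      = ((Finset.range (2*g)).filter (fun x => x ∈ S)).card := by
    apply Finset.card_nbij' (fun x => 2*g-1-x) (fun x => 2*g-1-x)
    · intro a ha
      simp only [Finset.mem_coe, Finset.mem_filter, Finset.mem_range] at ha ⊢
      obtain ⟨hal, har⟩ := ha
      have h := part3 a (by omega)
      refine ⟨by omega, ?_⟩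
      by_contra hc
      exact har (h.mpr hc)
    · intro a ha
      simp only [Finset.mem_coe, Finset.mem_filter, Finset.mem_range] at ha ⊢
      obtain ⟨hal, har⟩ := ha
      have h := part3 a (by omega)
      exact ⟨by omega, h.mp har⟩
    · intro a ha
      simp only [Finset.mem_coe, Finset.mem_filter, Finset.mem_range] at ha ⊢
      omega
    · intro a ha
      simp only [Finset.mem_coe, Finset.mem_filter, Finset.mem_range] at ha ⊢
      omega
  have htot : ((Finset.range (2*g)).filter (fun x => x ∈ S)).card
      + ((Finset.range (2*g)).filter (fun x => x ∉ S)).card = 2*g := by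
    rw [Finset.card_filter_add_card_filter_not, Finset.card_range]
  omega
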